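/- Let m be a natural number with m ≥ 1 and consider 3m flows indexed by Fin 3 × Fin m with bandwidths b (0, k) = 1/5, b (1, k) = 7/20 and b (2, k) = 9/20 for every k : Fin m, assigned to m edges indexed by Fin m, each of capacity 1. Then for every feasible assignment r : Fin 3 × Fin m → Fin m, every edge carries exactly one flow of bandwidth 1/5, exactly one flow of bandwidth 7/20 and exactly one flow of bandwidth 9/20, and the load of every edge equals exactly 1. -/

import Mathlib

open Finset

/-- The load on edge `e`: the sum of the bandwidths of the flows assigned to `e`. -/
noncomputable def load {ι : Type*} [Fintype ι] {m : ℕ} (b : ι → ℝ) (r : ι → Fin m)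
    (e : Fin m) : ℝ :=
  ∑ i ∈ univ.filter (fun i => r i = e), b i

/-- An assignment is feasible if the load of every edge is at most the capacity 1. -/
def Feasible {ι : Type*} [Fintype ι] {m : ℕ} (b : ι → ℝ) (r : ι → Fin m) : Prop :=
  ∀ e, load b r e ≤ 1

theorem stmt18 (m : ℕ) (hm : 1 ≤ m)
    (b : Fin 3 × Fin m → ℝ) (hb : b = fun p => ![(1 : ℝ)/5, 7/20, 9/20] p.1)
    (r : Fin 3 × Fin m → Fin m) (hr : Feasible b r) :
    ∀ e : Fin m,
      (∃! k : Fin m, r ((0 : Fin 3), k) = e) ∧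
      (∃! k : Fin m, r ((1 : Fin 3), k) = e) ∧
      (∃! k : Fin m, r ((2 : Fin 3), k) = e) ∧
      load b r e = 1 := by
  classical
  set A : Fin m → ℕ := fun e => ((univ : Finset (Fin m)).filter fun k => r (0, k) = e).card with hA
  set B : Fin m → ℕ := fun e => ((univ : Finset (Fin m)).filter fun k => r (1, k) = e).card with hB
  set C : Fin m → ℕ := fun e => ((univ : Finset (Fin m)).filter fun k => r (2, k) = e).card with hC
  have hload : ∀ e, load b r e = (A e : ℝ)/5 + 7*(B e)/20 + 9*(C e)/20 := by
    intro e
    rw [load, Finset.sum_filter, Fintype.sum_prod_type, Fin.sum_univ_three]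
    have h0 : ∀ i : Fin 3, (∑ k : Fin m, if r (i, k) = e then b (i, k) else 0)
        = (((univ : Finset (Fin m)).filter fun k => r (i, k) = e).card : ℝ)
          * ![(1 : ℝ)/5, 7/20, 9/20] i := by
      intro i
      rw [← Finset.sum_filter]
      rw [Finset.sum_congr rfl (fun k _ => show b (i, k) = ![(1 : ℝ)/5, 7/20, 9/20] i by
        simp [hb])]
      rw [Finset.sum_const, nsmul_eq_mul]
    rw [h0 0, h0 1, h0 2]
    simp only [hA, hB, hC]
    norm_num [Matrix.cons_val_zero, Matrix.cons_val_one, Matrix.head_cons]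
    simp [Matrix.cons_val_two, Matrix.tail_cons, Matrix.head_cons]
    ring
  -- sum of loads is m
  have hsum : ∑ e : Fin m, load b r e = (m : ℝ) := by
    unfold load
    rw [Finset.sum_fiberwise_of_maps_to (fun p _ => Finset.mem_univ (r p))]
    rw [hb, Fintype.sum_prod_type, Fin.sum_univ_three]
    simp
    ring
  -- each load equals 1
  have hload1 : ∀ e, load b r e = 1 := by
    by_contra h
    push_neg at h
    obtain ⟨e, he⟩ := h
    have hlt : load b r e < 1 := lt_of_le_of_ne (hr e) he
    have : ∑ e : Fin m, load b r e < ∑ _e : Fin m, (1 : ℝ) := by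
      apply Finset.sum_lt_sum (fun i _ => hr i) ⟨e, Finset.mem_univ e, hlt⟩
    rw [hsum] at this
    simp at this
  -- the Diophantine equation per edge
  have heq : ∀ e, 4 * A e + 7 * B e + 9 * C e = 20 := by
    intro e
    have h := hload e
    rw [hload1 e] at h
    have : (4 * A e + 7 * B e + 9 * C e : ℝ) = 20 := by
      push_cast
      linarith
    exact_mod_cast this
  -- B e ≤ 1
  have hBle : ∀ e, B e ≤ 1 := by
    intro e
    have h := heq e
    by_contra hb
    push_neg at hb
    have hc : C e = 0 := by omega
    have hb2 : B e = 2 := by omega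
    rw [hc, hb2] at h
    omega
  -- sum of B is m
  have hBsum : ∑ e : Fin m, B e = m := by
    have := Finset.card_eq_sum_card_fiberwise
      (f := fun k : Fin m => r (1, k)) (s := univ) (t := univ)
      (fun x _ => Finset.mem_univ _)
    simpa [hB] using this.symm
  have hB1 : ∀ e, B e = 1 := by
    by_contra h
    push_neg at h
    obtain ⟨e, he⟩ := h
    have hlt : B e < 1 := lt_of_le_of_ne (hBle e) he
    have : ∑ e : Fin m, B e < ∑ _e : Fin m, 1 :=
      Finset.sum_lt_sum (fun i _ => hBle i) ⟨e, Finset.mem_univ e, hlt⟩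
    rw [hBsum] at this
    simp at this
  have hA1 : ∀ e, A e = 1 := fun e => by have h := heq e; have := hB1 e; omega
  have hC1 : ∀ e, C e = 1 := fun e => by have h := heq e; have := hB1 e; omega
  -- conclude
  have key : ∀ (i : Fin 3) (e : Fin m),
      ((univ : Finset (Fin m)).filter fun k => r (i, k) = e).card = 1 →
      ∃! k : Fin m, r (i, k) = e := by
    intro i e hcard
    obtain ⟨a, ha⟩ := Finset.card_eq_one.mp hcard
    refine ⟨a, ?_, ?_⟩
    · have : a ∈ (univ : Finset (Fin m)).filter fun k => r (i, k) = e := ha ▸ Finset.mem_singleton_self a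
      exact (Finset.mem_filter.mp this).2
    · intro y hy
      have : y ∈ (univ : Finset (Fin m)).filter fun k => r (i, k) = e :=
        Finset.mem_filter.mpr ⟨Finset.mem_univ y, hy⟩
      rw [ha, Finset.mem_singleton] at this
      exact this
  intro e
  exact ⟨key 0 e (hA1 e), key 1 e (hB1 e), key 2 e (hC1 e), hload1 e⟩
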